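/- Let Λ and Γ be infinite sets with card Γ ≤ card Λ, and endow both ℝ^Λ and ℝ^Γ with their uniform topologies. Then the set CS(ℝ^Λ, ℝ^Γ) of continuous surjections from ℝ^Λ onto ℝ^Γ is 2^{card Γ}-lineable: there exists a linearly independent family of cardinality 2^{card Γ} in the real vector space of all maps ℝ^Λ → ℝ^Γ (with pointwise operations) such that every nonzero finite linear combination of its members is a continuous surjection from ℝ^Λ onto ℝ^Γ. -/
import Mathlib

open scoped UniformConvergence

universe u

namespace Stmt19Aux

variable {Γ : Type u} {Λ : Type u}

/-- Inner coordinate index type. -/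
abbrev Th (Γ : Type u) := Finset Γ × Finset (Finset Γ)

/-- A family of subsets of `Th Γ` indexed by `Set Γ`, with strong independence
properties. -/
def Sset (A : Set Γ) : Set (Th Γ) :=
  {p | ∃ q ∈ p.2, (q : Set Γ) = ↑p.1 ∩ A}

lemma Sset_nonempty (A : Set Γ) : (Sset A).Nonempty := by
  refine ⟨(∅, {∅}), ⟨∅, ?_, ?_⟩⟩
  · simp
  · simp

noncomputable def psi (A : Set Γ) (w : Th Γ → ℝ) : ℝ := sInf (w '' Sset A)

lemma psi_eq (A : Set Γ) {w : Th Γ → ℝ} {t : ℝ}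
    (h : ∃ θ ∈ Sset A, w θ = t) (hlb : ∀ θ ∈ Sset A, t ≤ w θ) : psi A w = t := by
  unfold psi
  obtain ⟨θ₀, hθ₀, hw⟩ := h
  have hmem : t ∈ w '' Sset A := ⟨θ₀, hθ₀, hw⟩
  have hbdd : BddBelow (w '' Sset A) := ⟨t, by rintro v ⟨θ, hθ, rfl⟩; exact hlb θ hθ⟩
  refine le_antisymm (csInf_le hbdd hmem) (le_csInf ⟨t, hmem⟩ ?_)
  rintro v ⟨θ, hθ, rfl⟩; exact hlb θ hθ

lemma psi_const (A : Set Γ) (t : ℝ) : psi A (fun _ => t) = t :=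
  psi_eq A ⟨(Sset_nonempty A).choose, (Sset_nonempty A).choose_spec, rfl⟩
    (fun _ _ => le_refl t)

lemma bddBelow_trans (A : Set Γ) {w w' : Th Γ → ℝ} {δ : ℝ}
    (h : ∀ θ, |w θ - w' θ| ≤ δ) (hb : BddBelow (w '' Sset A)) :
    BddBelow (w' '' Sset A) := by
  obtain ⟨m, hm⟩ := hb
  refine ⟨m - δ, ?_⟩
  rintro v ⟨θ, hθ, rfl⟩
  have h1 : m ≤ w θ := hm ⟨θ, hθ, rfl⟩
  have h2 : w θ - w' θ ≤ δ := (abs_le.1 (h θ)).2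
  linarith

lemma psi_dist (A : Set Γ) {w w' : Th Γ → ℝ} {δ : ℝ} (hδ : 0 ≤ δ)
    (h : ∀ θ, |w θ - w' θ| ≤ δ) : |psi A w - psi A w'| ≤ δ := by
  have h' : ∀ θ, |w' θ - w θ| ≤ δ := fun θ => (abs_sub_comm (w θ) (w' θ)) ▸ h θ
  have hne : (Sset A).Nonempty := Sset_nonempty A
  unfold psi
  by_cases hb : BddBelow (w '' Sset A)
  · have hb' : BddBelow (w' '' Sset A) := bddBelow_trans A h hb
    have h1 : sInf (w '' Sset A) - δ ≤ sInf (w' '' Sset A) := by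
      refine le_csInf (hne.image w') ?_
      rintro v ⟨θ, hθ, rfl⟩
      have h2 : sInf (w '' Sset A) ≤ w θ := csInf_le hb ⟨θ, hθ, rfl⟩
      have h3 : w θ - w' θ ≤ δ := (abs_le.1 (h θ)).2
      linarith
    have h4 : sInf (w' '' Sset A) - δ ≤ sInf (w '' Sset A) := by
      refine le_csInf (hne.image w) ?_
      rintro v ⟨θ, hθ, rfl⟩
      have h2 : sInf (w' '' Sset A) ≤ w' θ := csInf_le hb' ⟨θ, hθ, rfl⟩
      have h3 : w' θ - w θ ≤ δ := (abs_le.1 (h' θ)).2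
      linarith
    rw [abs_sub_le_iff]
    exact ⟨by linarith, by linarith⟩
  · have hb' : ¬ BddBelow (w' '' Sset A) := fun hb' => hb (bddBelow_trans A h' hb')
    rw [Real.sInf_of_not_bddBelow hb, Real.sInf_of_not_bddBelow hb']
    simpa using hδ

lemma atom (s : Finset (Set Γ)) (A₀ : Set Γ) :
    ∃ θ : Th Γ, θ ∈ Sset A₀ ∧ ∀ B ∈ s, B ≠ A₀ → θ ∉ Sset B := by
  classical
  have hpick : ∀ B ∈ s.erase A₀, ∃ γ, ¬(γ ∈ A₀ ↔ γ ∈ B) := by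
    intro B hB
    by_contra hall
    push_neg at hall
    exact (Finset.mem_erase.1 hB).1 (Set.ext fun γ => (hall γ).symm)
  choose pick hpickspec using hpick
  set Fs : Finset Γ := (s.erase A₀).attach.image (fun b => pick b.1 b.2) with hFs
  refine ⟨(Fs, {Fs.filter (· ∈ A₀)}), ⟨Fs.filter (· ∈ A₀), Finset.mem_singleton_self _, ?_⟩, ?_⟩
  · ext γ
    simp [Finset.coe_filter]
  · rintro B hB hne ⟨q, hq, hqe⟩
    rw [Finset.mem_singleton] at hq
    subst hq
    have hBe : B ∈ s.erase A₀ := Finset.mem_erase.2 ⟨hne, hB⟩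
    have hγmem : pick B hBe ∈ Fs := by
      rw [hFs]
      exact Finset.mem_image.2 ⟨⟨B, hBe⟩, Finset.mem_attach _ _, rfl⟩
    apply hpickspec B hBe
    set γ₀ := pick B hBe with hγ₀
    constructor
    · intro hA
      have hmem : γ₀ ∈ (↑(Fs.filter (· ∈ A₀)) : Set Γ) := by
        simp only [Finset.coe_filter, Set.mem_setOf_eq]
        exact ⟨hγmem, hA⟩
      rw [hqe] at hmem
      exact hmem.2
    · intro hBmem
      have hmem : (γ₀ : Γ) ∈ (↑Fs : Set Γ) ∩ B := ⟨hγmem, hBmem⟩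
      rw [← hqe] at hmem
      simp only [Finset.coe_filter, Set.mem_setOf_eq] at hmem
      exact hmem.2

/-- The basic family of maps. -/
noncomputable def Fam (k : Γ × Th Γ ↪ Λ) (A : Set Γ) (x : Λ → ℝ) (γ : Γ) : ℝ :=
  psi A (fun θ => x (k (γ, θ)))

lemma key_surj (k : Γ × Th Γ ↪ Λ) (c : Set Γ →₀ ℝ) (hc : c ≠ 0) :
    Function.Surjective (fun (x : Λ → ℝ) (γ : Γ) => ∑ A ∈ c.support, c A * Fam k A x γ) := by
  classical
  intro y
  by_cases hs : (∑ A ∈ c.support, c A) = 0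
  · -- zero-sum case: find positive and negative entries
    have hsupp : c.support.Nonempty := Finsupp.support_nonempty_iff.2 hc
    obtain ⟨A₁, hA₁⟩ := hsupp
    have hpos : ∃ A ∈ c.support, 0 < c A := by
      by_contra hall
      push_neg at hall
      have hz := (Finset.sum_eq_zero_iff_of_nonpos hall).1 hs
      exact Finsupp.mem_support_iff.1 hA₁ (hz A₁ hA₁)
    have hneg : ∃ A ∈ c.support, c A < 0 := by
      by_contra hall
      push_neg at hall
      have hz := (Finset.sum_eq_zero_iff_of_nonneg hall).1 hs
      exact Finsupp.mem_support_iff.1 hA₁ (hz A₁ hA₁)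
    obtain ⟨Ap, hApm, hAp⟩ := hpos
    obtain ⟨An, hAnm, hAn⟩ := hneg
    choose θat hat1 hat2 using fun A₀ : Set Γ => atom c.support A₀
    set B : Γ → Set Γ := fun γ => if 0 ≤ y γ then An else Ap with hB
    have hBmem : ∀ γ, B γ ∈ c.support := by
      intro γ; rw [hB]; dsimp only; split <;> assumption
    have hBne : ∀ γ, c (B γ) ≠ 0 := fun γ => Finsupp.mem_support_iff.1 (hBmem γ)
    set t : Γ → ℝ := fun γ => y γ / c (B γ) with ht
    have htn : ∀ γ, t γ ≤ 0 := by
      intro γ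
      rw [ht]; dsimp only
      rw [hB]; dsimp only
      split
      · rename_i hy
        rw [div_nonpos_iff]
        left; exact ⟨hy, le_of_lt hAn⟩
      · rename_i hy
        rw [div_nonpos_iff]
        right; exact ⟨le_of_lt (lt_of_not_ge hy), le_of_lt hAp⟩
    refine ⟨Function.extend (⇑k) (fun p : Γ × Th Γ => if p.2 = θat (B p.1) then t p.1 else 0)
      (fun _ => 0), ?_⟩
    funext γ
    dsimp only
    have hwfun : (fun θ => Function.extend (⇑k)
          (fun p : Γ × Th Γ => if p.2 = θat (B p.1) then t p.1 else 0) (fun _ => 0) (k (γ, θ)))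
        = fun θ => if θ = θat (B γ) then t γ else 0 :=
      funext fun θ => k.injective.extend_apply _ _ (γ, θ)
    have hFB : Fam k (B γ) (Function.extend (⇑k)
        (fun p : Γ × Th Γ => if p.2 = θat (B p.1) then t p.1 else 0) (fun _ => 0)) γ = t γ := by
      unfold Fam
      rw [hwfun]
      refine psi_eq _ ⟨θat (B γ), hat1 (B γ), if_pos rfl⟩ ?_
      intro θ hθ
      by_cases hθe : θ = θat (B γ)
      · rw [if_pos hθe]
      · rw [if_neg hθe]; exact htn γ
    have hF0 : ∀ A ∈ c.support, A ≠ B γ → Fam k A (Function.extend (⇑k)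
        (fun p : Γ × Th Γ => if p.2 = θat (B p.1) then t p.1 else 0) (fun _ => 0)) γ = 0 := by
      intro A hA hAne
      unfold Fam
      rw [hwfun]
      have hnot : ∀ θ ∈ Sset A, θ ≠ θat (B γ) := by
        intro θ hθ he
        exact hat2 (B γ) A hA hAne (he ▸ hθ)
      refine psi_eq _ ⟨(Sset_nonempty A).choose, (Sset_nonempty A).choose_spec, ?_⟩ ?_
      · rw [if_neg (hnot _ (Sset_nonempty A).choose_spec)]
      · intro θ hθ
        rw [if_neg (hnot θ hθ)]
    rw [Finset.sum_eq_single_of_mem (B γ) (hBmem γ)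
      (fun A hA hAne => by rw [hF0 A hA hAne, mul_zero])]
    rw [hFB, ht]
    dsimp only
    rw [mul_comm, div_mul_cancel₀ _ (hBne γ)]
  · -- nonzero-sum case: use constants
    refine ⟨Function.extend (⇑k) (fun p : Γ × Th Γ => y p.1 / (∑ A ∈ c.support, c A))
      (fun _ => 0), ?_⟩
    funext γ
    dsimp only
    have hwfun : (fun θ => Function.extend (⇑k)
          (fun p : Γ × Th Γ => y p.1 / (∑ A ∈ c.support, c A)) (fun _ => 0) (k (γ, θ)))
        = fun _ : Th Γ => y γ / (∑ A ∈ c.support, c A) :=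
      funext fun θ => k.injective.extend_apply _ _ (γ, θ)
    have hFA : ∀ A : Set Γ, Fam k A (Function.extend (⇑k)
        (fun p : Γ × Th Γ => y p.1 / (∑ A ∈ c.support, c A)) (fun _ => 0)) γ
        = y γ / (∑ A ∈ c.support, c A) := by
      intro A
      unfold Fam
      rw [hwfun]
      exact psi_const A _
    calc (∑ A ∈ c.support, c A * Fam k A (Function.extend (⇑k)
          (fun p : Γ × Th Γ => y p.1 / (∑ A ∈ c.support, c A)) (fun _ => 0)) γ)
        = ∑ A ∈ c.support, c A * (y γ / (∑ A ∈ c.support, c A)) :=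
          Finset.sum_congr rfl (fun A _ => by rw [hFA])
      _ = (∑ A ∈ c.support, c A) * (y γ / (∑ A ∈ c.support, c A)) := by
          rw [← Finset.sum_mul]
      _ = y γ := by rw [mul_comm, div_mul_cancel₀ _ hs]

lemma key_cont (k : Γ × Th Γ ↪ Λ) (c : Set Γ →₀ ℝ) :
    UniformContinuous (fun x : Λ →ᵤ ℝ =>
      (UniformFun.ofFun (fun γ => ∑ A ∈ c.support, c A * Fam k A (UniformFun.toFun x) γ)
        : Γ →ᵤ ℝ)) := by
  classical
  have hb1 := UniformFun.hasBasis_uniformity_of_basis Λ ℝ Metric.uniformity_basis_dist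
  have hb2 := UniformFun.hasBasis_uniformity_of_basis Γ ℝ Metric.uniformity_basis_dist
  rw [hb1.uniformContinuous_iff hb2]
  intro ε hε
  set M : ℝ := ∑ A ∈ c.support, |c A| with hM
  have hM0 : 0 ≤ M := Finset.sum_nonneg fun _ _ => abs_nonneg _
  refine ⟨ε / (M + 1), by positivity, ?_⟩
  intro x x' hxx'
  have hxx'' : ∀ lam : Λ, dist (UniformFun.toFun x lam) (UniformFun.toFun x' lam) < ε / (M + 1) :=
    hxx'
  clear hxx'
  show ∀ γ : Γ, dist _ _ < ε
  intro γ
  have hest : ∀ A : Set Γ,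
      |Fam k A (UniformFun.toFun x) γ - Fam k A (UniformFun.toFun x') γ| ≤ ε / (M + 1) := by
    intro A
    unfold Fam
    apply psi_dist A (le_of_lt (by positivity))
    intro θ
    have h := hxx'' (k (γ, θ))
    rw [Real.dist_eq] at h
    exact le_of_lt h
  rw [Real.dist_eq]
  simp only [UniformFun.toFun_ofFun]
  rw [← Finset.sum_sub_distrib]
  have h1 : |∑ A ∈ c.support,
      (c A * Fam k A (UniformFun.toFun x) γ - c A * Fam k A (UniformFun.toFun x') γ)|
      ≤ M * (ε / (M + 1)) := by
    calc |∑ A ∈ c.support,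
        (c A * Fam k A (UniformFun.toFun x) γ - c A * Fam k A (UniformFun.toFun x') γ)|
        ≤ ∑ A ∈ c.support,
          |c A * Fam k A (UniformFun.toFun x) γ - c A * Fam k A (UniformFun.toFun x') γ| :=
          Finset.abs_sum_le_sum_abs _ _
      _ ≤ ∑ A ∈ c.support, |c A| * (ε / (M + 1)) := by
          refine Finset.sum_le_sum fun A _ => ?_
          rw [← mul_sub, abs_mul]
          exact mul_le_mul_of_nonneg_left (hest A) (abs_nonneg _)
      _ = M * (ε / (M + 1)) := by rw [hM, Finset.sum_mul]
  have h2 : M * (ε / (M + 1)) < ε := by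
    have hd : 0 < ε / (M + 1) := by positivity
    have h3 : M * (ε / (M + 1)) < (M + 1) * (ε / (M + 1)) := by nlinarith
    have h4 : (M + 1) * (ε / (M + 1)) = ε := by field_simp
    linarith
  exact lt_of_le_of_lt h1 h2

end Stmt19Aux

theorem stmt19 (Λ Γ : Type u) [Infinite Λ] [Infinite Γ]
    (hcard : Cardinal.mk Γ ≤ Cardinal.mk Λ) :
    ∃ (ι : Type u) (F : ι → ((Λ → ℝ) → (Γ → ℝ))),
      Cardinal.mk ι = 2 ^ Cardinal.mk Γ ∧
      LinearIndependent ℝ F ∧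
      ∀ g ∈ Submodule.span ℝ (Set.range F), g ≠ 0 →
        Continuous (fun x : Λ →ᵤ ℝ =>
          (UniformFun.ofFun (g (UniformFun.toFun x)) : Γ →ᵤ ℝ)) ∧
        Function.Surjective g := by
  classical
  obtain ⟨k⟩ : Nonempty (Γ × Stmt19Aux.Th Γ ↪ Λ) := by
    rw [← Cardinal.le_def]
    have hℵ : Cardinal.aleph0 ≤ Cardinal.mk Γ := Cardinal.aleph0_le_mk Γ
    have h1 : Cardinal.mk (Γ × Stmt19Aux.Th Γ) = Cardinal.mk Γ := by
      have hf1 : Cardinal.mk (Finset Γ) = Cardinal.mk Γ := Cardinal.mk_finset_of_infinite Γ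
      have hf2 : Cardinal.mk (Finset (Finset Γ)) = Cardinal.mk (Finset Γ) :=
        Cardinal.mk_finset_of_infinite (Finset Γ)
      have : Cardinal.mk (Γ × Stmt19Aux.Th Γ)
          = Cardinal.mk Γ * (Cardinal.mk (Finset Γ) * Cardinal.mk (Finset (Finset Γ))) := by
        simp [Cardinal.mk_prod]
      rw [this, hf2, hf1, Cardinal.mul_eq_self hℵ, Cardinal.mul_eq_self hℵ]
    rw [h1]; exact hcard
  refine ⟨Set Γ, Stmt19Aux.Fam k, Cardinal.mk_set, ?_, ?_⟩
  · -- linear independence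
    rw [linearIndependent_iff]
    intro l hl
    by_contra hl0
    obtain ⟨x, hx⟩ := Stmt19Aux.key_surj k l hl0 (fun _ => 1)
    obtain γ₀ := Classical.arbitrary Γ
    have h1 : (∑ A ∈ l.support, l A * Stmt19Aux.Fam k A x γ₀) = 1 := by
      have := congrFun hx γ₀
      simpa using this
    have h2 : (∑ A ∈ l.support, l A * Stmt19Aux.Fam k A x γ₀) = 0 := by
      have h3 := congrFun (congrFun hl x) γ₀
      rw [Finsupp.linearCombination_apply, Finsupp.sum, Finset.sum_apply, Finset.sum_apply] at h3
      simpa using h3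
    rw [h2] at h1
    exact zero_ne_one h1
  · intro g hg hg0
    obtain ⟨c, hcg⟩ := Finsupp.mem_span_range_iff_exists_finsupp.1 hg
    have hgfun : g = fun x γ => ∑ A ∈ c.support, c A * Stmt19Aux.Fam k A x γ := by
      funext x γ
      rw [← hcg, Finsupp.sum, Finset.sum_apply, Finset.sum_apply]
      simp
    have hc0 : c ≠ 0 := by
      rintro rfl
      apply hg0
      rw [← hcg]
      simp
    constructor
    · have hcont := Stmt19Aux.key_cont k c
      have heq : (fun x : Λ →ᵤ ℝ => (UniformFun.ofFun (g (UniformFun.toFun x)) : Γ →ᵤ ℝ))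
          = fun x : Λ →ᵤ ℝ =>
            (UniformFun.ofFun
              (fun γ => ∑ A ∈ c.support, c A * Stmt19Aux.Fam k A (UniformFun.toFun x) γ)
              : Γ →ᵤ ℝ) := by
        simp only [hgfun]
      rw [heq]
      exact hcont.continuous
    · rw [hgfun]
      exact Stmt19Aux.key_surj k c hc0
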